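/- Variance lower bound for symmetric unimodal densities: Let f : ℝ → ℝ be a probability density function that is symmetric around 0, non-increasing on [0, ∞), and satisfies f(0) > 0. Then ∫_ℝ x² f(x) dx ≥ 1/(12 f(0)²). -/

import Mathlib

open MeasureTheory

/-- Variance lower bound for symmetric unimodal densities: if `f` is a density on `ℝ`,
symmetric around `0`, non-increasing on `[0,∞)`, with `f(0) > 0`, then
`∫ x² f(x) dx ≥ 1/(12 f(0)²)` (the second moment may be `+∞`, hence the lower
Lebesgue integral formulation). -/
theorem variance_lower_bound_symmetric_unimodal
    (f : ℝ → ℝ)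
    (h_nonneg : ∀ x, 0 ≤ f x) (h_meas : Measurable f)
    (h_int : ∫ x, f x = 1)
    (h_symm : ∀ x, f (-x) = f x)
    (h_mono : ∀ x y, 0 ≤ x → x ≤ y → f y ≤ f x)
    (h0 : 0 < f 0) :
    ENNReal.ofReal (1 / (12 * f 0 ^ 2)) ≤ ∫⁻ x, ENNReal.ofReal (x ^ 2 * f x) := by
  set c := f 0 with hc
  set a : ℝ := 1 / (2 * c) with ha
  have hapos : 0 < a := by positivity
  set g : ℝ → ℝ := (Set.Icc (-a) a).indicator (fun _ => c) with hg
  -- f ≤ c everywhere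
  have hfle : ∀ x, f x ≤ c := by
    intro x
    rcases le_or_gt 0 x with hx | hx
    · exact h_mono 0 x le_rfl hx
    · have := h_symm x
      rw [← this]
      exact h_mono 0 (-x) le_rfl (by linarith)
  -- f is integrable
  have hf_int : Integrable f := by
    by_contra h
    rw [integral_undef h] at h_int
    norm_num at h_int
  -- g facts
  have hg_nonneg : ∀ x, 0 ≤ g x := by
    intro x
    exact Set.indicator_nonneg (fun _ _ => le_of_lt h0) x
  have hg_int : Integrable g := by
    rw [hg, integrable_indicator_iff measurableSet_Icc]
    exact integrableOn_const measure_Icc_lt_top.ne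
  have hgval : ∫ x, g x = 1 := by
    rw [hg, integral_indicator measurableSet_Icc, setIntegral_const,
      Real.volume_real_Icc]
    rw [max_eq_left (by linarith), ha]
    field_simp
    norm_num
    field_simp [h0.ne']
  -- x^2 * g
  have hind : (fun x => x ^ 2 * g x) = (Set.Icc (-a) a).indicator (fun x => x ^ 2 * c) := by
    funext x
    by_cases hx : x ∈ Set.Icc (-a) a <;> simp [hg, Set.indicator, hx]
  have hg2_int : Integrable (fun x => x ^ 2 * g x) := by
    rw [hind, integrable_indicator_iff measurableSet_Icc]
    exact (((continuous_pow 2).mul continuous_const).integrableOn_Icc)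
  have hg2val : ∫ x, x ^ 2 * g x = 1 / (12 * c ^ 2) := by
    rw [hind, integral_indicator measurableSet_Icc,
      MeasureTheory.integral_Icc_eq_integral_Ioc,
      ← intervalIntegral.integral_of_le (by linarith : -a ≤ a)]
    rw [intervalIntegral.integral_mul_const, integral_pow]
    rw [ha]
    field_simp
    ring_nf
    field_simp
  -- pointwise inequality
  have hpt : ∀ x, x ^ 2 * g x + a ^ 2 * f x ≤ x ^ 2 * f x + a ^ 2 * g x := by
    intro x
    by_cases hx : x ∈ Set.Icc (-a) a
    · have hx2 : x ^ 2 ≤ a ^ 2 := by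
        rcases hx with ⟨h1, h2⟩
        nlinarith
      have := hfle x
      have hgx : g x = c := by simp [hg, Set.indicator, hx]
      rw [hgx]
      nlinarith
    · have hgx : g x = 0 := by simp [hg, Set.indicator, hx]
      have hx2 : a ^ 2 ≤ x ^ 2 := by
        simp only [Set.mem_Icc, not_and_or, not_le] at hx
        rcases hx with h1 | h2
        · nlinarith
        · nlinarith
      have := h_nonneg x
      rw [hgx]
      nlinarith
  -- lintegral versions
  have hmg : Measurable g := by
    exact Measurable.indicator measurable_const measurableSet_Icc
  have hL1 : ∫⁻ x, ENNReal.ofReal (g x) = 1 := by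
    rw [← ofReal_integral_eq_lintegral_ofReal hg_int (Filter.Eventually.of_forall hg_nonneg),
      hgval, ENNReal.ofReal_one]
  have hL2 : ∫⁻ x, ENNReal.ofReal (f x) = 1 := by
    rw [← ofReal_integral_eq_lintegral_ofReal hf_int (Filter.Eventually.of_forall h_nonneg),
      h_int, ENNReal.ofReal_one]
  have hL3 : ∫⁻ x, ENNReal.ofReal (x ^ 2 * g x) = ENNReal.ofReal (1 / (12 * c ^ 2)) := by
    rw [← ofReal_integral_eq_lintegral_ofReal hg2_int
      (Filter.Eventually.of_forall (fun x => mul_nonneg (sq_nonneg x) (hg_nonneg x))), hg2val]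
  -- main inequality via lintegral_mono
  have hmono : (∫⁻ x, ENNReal.ofReal (x ^ 2 * g x + a ^ 2 * f x))
      ≤ ∫⁻ x, ENNReal.ofReal (x ^ 2 * f x + a ^ 2 * g x) := by
    apply lintegral_mono
    intro x
    exact ENNReal.ofReal_le_ofReal (hpt x)
  have hsplitL : (∫⁻ x, ENNReal.ofReal (x ^ 2 * g x + a ^ 2 * f x))
      = ENNReal.ofReal (1 / (12 * c ^ 2)) + ENNReal.ofReal (a ^ 2) := by
    have : ∀ x, ENNReal.ofReal (x ^ 2 * g x + a ^ 2 * f x)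
        = ENNReal.ofReal (x ^ 2 * g x) + ENNReal.ofReal (a ^ 2) * ENNReal.ofReal (f x) := by
      intro x
      rw [ENNReal.ofReal_add (mul_nonneg (sq_nonneg x) (hg_nonneg x))
        (mul_nonneg (sq_nonneg a) (h_nonneg x)), ENNReal.ofReal_mul (sq_nonneg a)]
    simp only [this]
    rw [lintegral_add_left (show Measurable fun x => ENNReal.ofReal (x ^ 2 * g x) from ((measurable_id'.pow_const 2).mul hmg).ennreal_ofReal),
      lintegral_const_mul _ h_meas.ennreal_ofReal, hL2, hL3, mul_one]
  have hsplitR : (∫⁻ x, ENNReal.ofReal (x ^ 2 * f x + a ^ 2 * g x))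
      = (∫⁻ x, ENNReal.ofReal (x ^ 2 * f x)) + ENNReal.ofReal (a ^ 2) := by
    have : ∀ x, ENNReal.ofReal (x ^ 2 * f x + a ^ 2 * g x)
        = ENNReal.ofReal (x ^ 2 * f x) + ENNReal.ofReal (a ^ 2) * ENNReal.ofReal (g x) := by
      intro x
      rw [ENNReal.ofReal_add (mul_nonneg (sq_nonneg x) (h_nonneg x))
        (mul_nonneg (sq_nonneg a) (hg_nonneg x)), ENNReal.ofReal_mul (sq_nonneg a)]
    simp only [this]
    rw [lintegral_add_left (show Measurable fun x => ENNReal.ofReal (x ^ 2 * f x) from ((measurable_id'.pow_const 2).mul h_meas).ennreal_ofReal),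
      lintegral_const_mul _ hmg.ennreal_ofReal, hL1, mul_one]
  rw [hsplitL, hsplitR] at hmono
  exact (ENNReal.add_le_add_iff_right ENNReal.ofReal_ne_top).mp hmono
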